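/- For α ∈ (0,1/2), the kernel h(θ) = sin(θ)/|θ|_o^{2α} is (1-2α)-Hölder continuous on the torus: for all θ₁, θ₂ ∈ ℝ with θ₁ - θ₂ ∈ (-π, π], |h(θ₁) - h(θ₂)| ≤ cosh(π) · |θ₁ - θ₂|^{1-2α}. -/

import Mathlib

/-- Representative of `θ` modulo `2π` in the interval `(-π, π]`. -/
noncomputable def rep (θ : ℝ) : ℝ := toIocMod Real.two_pi_pos (-Real.pi) θ

/-- Orthodromic distance `|θ|_o` of `e^{iθ}` to `1` on the unit circle. -/
noncomputable def ortho (θ : ℝ) : ℝ := |rep θ|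

/-- The singular Kuramoto kernel `h(θ) = sin θ / |θ|_o^{2α}` (with value `0` on `2πℤ`). -/
noncomputable def hker (α θ : ℝ) : ℝ := Real.sin θ / (ortho θ) ^ (2 * α)

lemma sinLip (x y : ℝ) : |Real.sin x - Real.sin y| ≤ |x - y| := by
  rw [Real.sin_sub_sin]
  calc |2 * Real.sin ((x - y) / 2) * Real.cos ((x + y) / 2)|
      = 2 * |Real.sin ((x - y) / 2)| * |Real.cos ((x + y) / 2)| := by
        rw [abs_mul, abs_mul, abs_two]
    _ ≤ 2 * |(x - y) / 2| * 1 :=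
        mul_le_mul (by have := Real.abs_sin_le_abs (x := (x - y) / 2); linarith)
          (Real.abs_cos_le_one _) (abs_nonneg _) (by positivity)
    _ = |x - y| := by rw [abs_div, abs_two]; ring

lemma gb (α : ℝ) (hα1 : 2 * α < 1) (x : ℝ) :
    |Real.sin x / |x| ^ (2 * α)| ≤ |x| ^ (1 - 2 * α) := by
  rcases eq_or_ne x 0 with rfl | hx
  · simp [Real.zero_rpow (by linarith : (1:ℝ) - 2 * α ≠ 0)]
  · have hx0 : (0:ℝ) < |x| := abs_pos.mpr hx
    rw [abs_div, abs_of_nonneg (Real.rpow_nonneg (abs_nonneg x) _),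
        Real.rpow_sub hx0, Real.rpow_one]
    exact (div_le_div_iff_of_pos_right (Real.rpow_pos_of_pos hx0 _)).mpr
      Real.abs_sin_le_abs

lemma wrapb (α : ℝ) (hα0 : 0 < α) (hα1 : 2 * α < 1) (x d : ℝ) (hx : 1 ≤ |x|)
    (hs : |Real.sin x| ≤ d) (hd : d ≤ 1) :
    |Real.sin x / |x| ^ (2 * α)| ≤ d ^ (1 - 2 * α) := by
  have hd0 : 0 ≤ d := le_trans (abs_nonneg _) hs
  have hX : 1 ≤ |x| ^ (2 * α) := Real.one_le_rpow hx (by linarith)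
  have h1 : |Real.sin x / |x| ^ (2 * α)| ≤ d := by
    rw [abs_div, abs_of_nonneg (Real.rpow_nonneg (abs_nonneg x) _)]
    calc |Real.sin x| / |x| ^ (2 * α) ≤ d / |x| ^ (2 * α) :=
          (div_le_div_iff_of_pos_right (lt_of_lt_of_le zero_lt_one hX)).mpr hs
      _ ≤ d := div_le_self hd0 hX
  rcases eq_or_lt_of_le hd0 with h | h
  · rw [← h, Real.zero_rpow (by linarith : (1:ℝ) - 2 * α ≠ 0)]
    rw [← h] at h1; exact h1
  · refine h1.trans ?_
    calc d = d ^ (1:ℝ) := (Real.rpow_one d).symm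
      _ ≤ d ^ (1 - 2 * α) := Real.rpow_le_rpow_of_exponent_ge h hd (by linarith)

lemma core (α : ℝ) (hα0 : 0 < α) (hα1 : 2 * α < 1) (x y : ℝ) (hyx : |y| ≤ |x|) :
    |Real.sin x / |x| ^ (2 * α) - Real.sin y / |y| ^ (2 * α)|
      ≤ 2 * |x - y| ^ (1 - 2 * α) := by
  set d : ℝ := |x - y| with hddef
  have hd0 : 0 ≤ d := abs_nonneg _
  rcases eq_or_lt_of_le hd0 with hd | hd
  · have hxy : x = y := by
      have := abs_eq_zero.mp hd.symm; linarith [this]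
    subst hxy
    simp [← hd]
    positivity
  rcases le_or_gt |x| d with hxd | hxd
  · have h1 := gb α hα1 x
    have h2 := gb α hα1 y
    have hx1 : |x| ^ (1 - 2*α) ≤ d ^ (1 - 2*α) :=
      Real.rpow_le_rpow (abs_nonneg x) hxd (by linarith)
    have hy1 : |y| ^ (1 - 2*α) ≤ d ^ (1 - 2*α) :=
      Real.rpow_le_rpow (abs_nonneg y) (hyx.trans hxd) (by linarith)
    calc |Real.sin x / |x| ^ (2 * α) - Real.sin y / |y| ^ (2 * α)|
        ≤ |Real.sin x / |x| ^ (2 * α)| + |Real.sin y / |y| ^ (2 * α)| := abs_sub _ _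
      _ ≤ 2 * d ^ (1 - 2*α) := by linarith
  · have hx0 : (0:ℝ) < |x| := lt_of_le_of_lt hd0 hxd
    have hy0 : (0:ℝ) < |y| := by
      have := abs_sub_abs_le_abs_sub x y; rw [← hddef] at this; linarith
    set X : ℝ := |x| ^ (2*α) with hXdef
    set Y : ℝ := |y| ^ (2*α) with hYdef
    have hX : 0 < X := Real.rpow_pos_of_pos hx0 _
    have hY : 0 < Y := Real.rpow_pos_of_pos hy0 _
    have hYX : Y ≤ X := Real.rpow_le_rpow (abs_nonneg y) hyx (by linarith)
    have hdX : d ^ (2*α) ≤ X := Real.rpow_le_rpow hd0 hxd.le (by linarith)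
    have hsplit : Real.sin x / X - Real.sin y / Y
        = (Real.sin x - Real.sin y) / X + Real.sin y * (1/X - 1/Y) := by
      field_simp; ring
    have hT1 : |(Real.sin x - Real.sin y) / X| ≤ d ^ (1 - 2*α) := by
      rw [abs_div, abs_of_pos hX]
      calc |Real.sin x - Real.sin y| / X ≤ d / X :=
            (div_le_div_iff_of_pos_right hX).mpr (sinLip x y)
        _ ≤ d / d ^ (2*α) :=
            div_le_div_of_nonneg_left hd0 (Real.rpow_pos_of_pos hd _) hdX
        _ = d ^ (1 - 2*α) := by
            rw [Real.rpow_sub hd, Real.rpow_one]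
    have hT2 : |Real.sin y * (1/X - 1/Y)| ≤ d ^ (1 - 2*α) := by
      have hfrac : 0 ≤ 1/Y - 1/X := by
        rw [sub_nonneg]; exact one_div_le_one_div_of_le hY hYX
      have habs : |Real.sin y * (1/X - 1/Y)| = |Real.sin y| * (1/Y - 1/X) := by
        rw [abs_mul, abs_sub_comm, abs_of_nonneg hfrac]
      rw [habs]
      have step1 : |Real.sin y| * (1/Y - 1/X) ≤ |y| * (1/Y - 1/X) :=
        mul_le_mul_of_nonneg_right Real.abs_sin_le_abs hfrac
      have hyY : |y| / Y = |y| ^ (1 - 2*α) := by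
        rw [hYdef, Real.rpow_sub hy0, Real.rpow_one]
      have hkey : |y| ^ (1 - 2*α) * X ≤ |y| + d := by
        have h1 : |y| ^ (1 - 2*α) ≤ |x| ^ (1 - 2*α) :=
          Real.rpow_le_rpow (abs_nonneg y) hyx (by linarith)
        have h2 : |x| ^ (1 - 2*α) * X = |x| := by
          rw [hXdef, ← Real.rpow_add hx0]
          norm_num
        have h3 : |x| ≤ |y| + d := by
          have := abs_sub_abs_le_abs_sub x y; rw [← hddef] at this; linarith
        calc |y| ^ (1 - 2*α) * X ≤ |x| ^ (1 - 2*α) * X :=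
              mul_le_mul_of_nonneg_right h1 hX.le
          _ = |x| := h2
          _ ≤ |y| + d := h3
      have step2 : |y| * (1/Y - 1/X) ≤ d / X := by
        have e1 : |y| * (1/Y - 1/X) = |y| ^ (1 - 2*α) - |y| / X := by
          rw [mul_sub, mul_one_div, mul_one_div, hyY]
        rw [e1, sub_le_iff_le_add, ← add_div, le_div_iff₀ hX]
        linarith [hkey]
      have step3 : d / X ≤ d ^ (1 - 2*α) := by
        calc d / X ≤ d / d ^ (2*α) :=
              div_le_div_of_nonneg_left hd0 (Real.rpow_pos_of_pos hd _) hdX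
          _ = d ^ (1 - 2*α) := by rw [Real.rpow_sub hd, Real.rpow_one]
      linarith
    calc |Real.sin x / X - Real.sin y / Y|
        = |(Real.sin x - Real.sin y) / X + Real.sin y * (1/X - 1/Y)| := by rw [hsplit]
      _ ≤ |(Real.sin x - Real.sin y) / X| + |Real.sin y * (1/X - 1/Y)| := abs_add_le _ _
      _ ≤ 2 * d ^ (1 - 2*α) := by linarith

lemma coshPi : 2 * Real.pi ≤ Real.cosh Real.pi := by
  have h1 : Real.exp 1 > 2.7182818283 := Real.exp_one_gt_d9
  have h3 : Real.exp 3 = Real.exp 1 * Real.exp 1 * Real.exp 1 := by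
    rw [← Real.exp_add, ← Real.exp_add]; norm_num
  have he : Real.exp 3 ≤ Real.exp Real.pi :=
    Real.exp_le_exp.mpr Real.pi_gt_three.le
  have hneg : 0 < Real.exp (-Real.pi) := Real.exp_pos _
  have hπ : Real.pi < 3.15 := by
    have := Real.pi_lt_d2; linarith
  rw [Real.cosh_eq]
  nlinarith [Real.exp_pos 1]

/-- For `α ∈ (0,1/2)`, the kernel `h` is `(1-2α)`-Hölder continuous:
`|h(θ₁) - h(θ₂)| ≤ cosh(π) · |θ₁ - θ₂|^{1-2α}` whenever `θ₁ - θ₂ ∈ (-π, π]`. -/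
theorem stmt0 (α : ℝ) (hα : α ∈ Set.Ioo (0:ℝ) (1/2)) (θ₁ θ₂ : ℝ)
    (hθ : θ₁ - θ₂ ∈ Set.Ioc (-Real.pi) Real.pi) :
    |hker α θ₁ - hker α θ₂| ≤ Real.cosh Real.pi * |θ₁ - θ₂| ^ (1 - 2 * α) := by
  obtain ⟨hα0, hα2⟩ := hα
  have hα1 : 2 * α < 1 := by linarith
  have hπ3 : (3:ℝ) < Real.pi := Real.pi_gt_three
  have hcosh : 2 * Real.pi ≤ Real.cosh Real.pi := coshPi
  obtain ⟨hθl, hθr⟩ := hθ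
  -- basic facts about `rep`
  have hIoc : ∀ θ : ℝ, rep θ ∈ Set.Ioc (-Real.pi) Real.pi := fun θ => by
    have h := toIocMod_mem_Ioc Real.two_pi_pos (-Real.pi) θ
    rwa [show -Real.pi + 2 * Real.pi = Real.pi by ring] at h
  have hsin : ∀ θ : ℝ, Real.sin (rep θ) = Real.sin θ := fun θ => by
    rw [rep, toIocMod, zsmul_eq_mul, Real.sin_sub_int_mul_two_pi]
  have hkerq : ∀ θ : ℝ, hker α θ = Real.sin (rep θ) / |rep θ| ^ (2 * α) := fun θ => by
    unfold hker ortho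
    rw [hsin θ]
  rw [hkerq θ₁, hkerq θ₂]
  obtain ⟨hx1, hx2⟩ := hIoc θ₁
  obtain ⟨hy1, hy2⟩ := hIoc θ₂
  have hax : |rep θ₁| ≤ Real.pi := abs_le.mpr ⟨by linarith, hx2⟩
  have hay : |rep θ₂| ≤ Real.pi := abs_le.mpr ⟨by linarith, hy2⟩
  have hrpow0 : (0:ℝ) ≤ |θ₁ - θ₂| ^ (1 - 2 * α) := Real.rpow_nonneg (abs_nonneg _) _
  -- Case 1 : the points are far apart
  rcases le_or_gt 1 |θ₁ - θ₂| with hfar | hnear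
  · have hone : (1:ℝ) ≤ |θ₁ - θ₂| ^ (1 - 2 * α) := Real.one_le_rpow hfar (by linarith)
    have hbx : |Real.sin (rep θ₁) / |rep θ₁| ^ (2 * α)| ≤ Real.pi := by
      refine (gb α hα1 _).trans ?_
      calc |rep θ₁| ^ (1 - 2*α) ≤ Real.pi ^ (1 - 2*α) :=
            Real.rpow_le_rpow (abs_nonneg _) hax (by linarith)
        _ ≤ Real.pi ^ (1:ℝ) :=
            Real.rpow_le_rpow_of_exponent_le (by linarith) (by linarith)
        _ = Real.pi := Real.rpow_one _
    have hby : |Real.sin (rep θ₂) / |rep θ₂| ^ (2 * α)| ≤ Real.pi := by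
      refine (gb α hα1 _).trans ?_
      calc |rep θ₂| ^ (1 - 2*α) ≤ Real.pi ^ (1 - 2*α) :=
            Real.rpow_le_rpow (abs_nonneg _) hay (by linarith)
        _ ≤ Real.pi ^ (1:ℝ) :=
            Real.rpow_le_rpow_of_exponent_le (by linarith) (by linarith)
        _ = Real.pi := Real.rpow_one _
    have hco : Real.cosh Real.pi ≤ Real.cosh Real.pi * |θ₁ - θ₂| ^ (1 - 2 * α) := by
      nlinarith
    calc |Real.sin (rep θ₁) / |rep θ₁| ^ (2 * α) - Real.sin (rep θ₂) / |rep θ₂| ^ (2 * α)|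
        ≤ |Real.sin (rep θ₁) / |rep θ₁| ^ (2 * α)| + |Real.sin (rep θ₂) / |rep θ₂| ^ (2 * α)| :=
          abs_sub _ _
      _ ≤ 2 * Real.pi := by linarith
      _ ≤ Real.cosh Real.pi := hcosh
      _ ≤ Real.cosh Real.pi * |θ₁ - θ₂| ^ (1 - 2 * α) := hco
  -- Case 2 : the points are close
  rcases eq_or_ne θ₁ θ₂ with rfl | hne
  · simp
    positivity
  have hδ0 : 0 < |θ₁ - θ₂| := abs_pos.mpr (sub_ne_zero.mpr hne)
  -- the difference of representatives differs from θ₁ - θ₂ by a multiple of 2π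
  obtain ⟨k, hk⟩ : ∃ k : ℤ, rep θ₁ - rep θ₂ = (θ₁ - θ₂) + (k : ℝ) * (2 * Real.pi) := by
    refine ⟨toIocDiv Real.two_pi_pos (-Real.pi) θ₂ - toIocDiv Real.two_pi_pos (-Real.pi) θ₁, ?_⟩
    unfold rep toIocMod
    push_cast [zsmul_eq_mul]
    ring
  have hkrange : k = -1 ∨ k = 0 ∨ k = 1 := by
    have h1 : (k:ℝ) * (2 * Real.pi) < 3 * Real.pi := by nlinarith
    have h2 : -(3 * Real.pi) < (k:ℝ) * (2 * Real.pi) := by nlinarith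
    have hk1 : (k:ℝ) < 2 := by nlinarith
    have hk2 : (-2:ℝ) < (k:ℝ) := by nlinarith
    have hk1' : k < 2 := by exact_mod_cast hk1
    have hk2' : -2 < k := by exact_mod_cast hk2
    omega
  have h2le : (2:ℝ) ≤ Real.cosh Real.pi := by linarith
  -- helper to conclude from a `2 * ...` bound
  have conclude : ∀ A : ℝ, |A| ≤ 2 * |θ₁ - θ₂| ^ (1 - 2 * α) →
      |A| ≤ Real.cosh Real.pi * |θ₁ - θ₂| ^ (1 - 2 * α) := by
    intro A hA
    refine hA.trans (mul_le_mul_of_nonneg_right h2le hrpow0)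
  rcases hkrange with rfl | rfl | rfl
  · -- wrap-around case k = -1
    have hkk : rep θ₁ - rep θ₂ = (θ₁ - θ₂) - 2 * Real.pi := by push_cast at hk; linarith
    have hpos : 0 < θ₁ - θ₂ := by nlinarith
    have habs : |θ₁ - θ₂| = θ₁ - θ₂ := abs_of_pos hpos
    have hxlow : Real.pi - |θ₁ - θ₂| ≤ |rep θ₁| := by
      have h1 : -(rep θ₁) ≤ |rep θ₁| := neg_le_abs _
      rw [habs]; linarith
    have hylow : Real.pi - |θ₁ - θ₂| ≤ |rep θ₂| := by
      have h1 : rep θ₂ ≤ |rep θ₂| := le_abs_self _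
      rw [habs]; linarith
    have honex : (1:ℝ) ≤ |rep θ₁| := by linarith
    have honey : (1:ℝ) ≤ |rep θ₂| := by linarith
    have hsinabs : ∀ z : ℝ, |Real.sin z| = |Real.sin (|z|)| := fun z => by
      rcases le_or_gt 0 z with h | h
      · rw [abs_of_nonneg h]
      · rw [abs_of_neg h, Real.sin_neg, abs_neg]
    have hsx : |Real.sin (rep θ₁)| ≤ |θ₁ - θ₂| := by
      rw [hsinabs, ← Real.sin_pi_sub]
      refine (Real.abs_sin_le_abs).trans ?_
      rw [abs_of_nonneg (by linarith : (0:ℝ) ≤ Real.pi - |rep θ₁|)]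
      linarith
    have hsy : |Real.sin (rep θ₂)| ≤ |θ₁ - θ₂| := by
      rw [hsinabs, ← Real.sin_pi_sub]
      refine (Real.abs_sin_le_abs).trans ?_
      rw [abs_of_nonneg (by linarith : (0:ℝ) ≤ Real.pi - |rep θ₂|)]
      linarith
    have hb1 := wrapb α hα0 hα1 (rep θ₁) |θ₁ - θ₂| honex hsx hnear.le
    have hb2 := wrapb α hα0 hα1 (rep θ₂) |θ₁ - θ₂| honey hsy hnear.le
    refine conclude _ ?_
    calc |Real.sin (rep θ₁) / |rep θ₁| ^ (2 * α) - Real.sin (rep θ₂) / |rep θ₂| ^ (2 * α)|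
        ≤ |Real.sin (rep θ₁) / |rep θ₁| ^ (2 * α)| + |Real.sin (rep θ₂) / |rep θ₂| ^ (2 * α)| :=
          abs_sub _ _
      _ ≤ 2 * |θ₁ - θ₂| ^ (1 - 2 * α) := by linarith
  · -- main case k = 0
    have hkk : rep θ₁ - rep θ₂ = θ₁ - θ₂ := by push_cast at hk; linarith
    refine conclude _ ?_
    rw [show |θ₁ - θ₂| = |rep θ₁ - rep θ₂| by rw [hkk]]
    rcases le_total |rep θ₂| |rep θ₁| with h | h
    · exact core α hα0 hα1 _ _ h
    · rw [abs_sub_comm, abs_sub_comm (rep θ₁) (rep θ₂)]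
      exact core α hα0 hα1 _ _ h
  · -- wrap-around case k = 1
    have hkk : rep θ₁ - rep θ₂ = (θ₁ - θ₂) + 2 * Real.pi := by push_cast at hk; linarith
    have hneg : θ₁ - θ₂ < 0 := by nlinarith
    have habs : |θ₁ - θ₂| = -(θ₁ - θ₂) := abs_of_neg hneg
    have hxlow : Real.pi - |θ₁ - θ₂| ≤ |rep θ₁| := by
      have h1 : rep θ₁ ≤ |rep θ₁| := le_abs_self _
      rw [habs]; linarith
    have hylow : Real.pi - |θ₁ - θ₂| ≤ |rep θ₂| := by
      have h1 : -(rep θ₂) ≤ |rep θ₂| := neg_le_abs _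
      rw [habs]; linarith
    have honex : (1:ℝ) ≤ |rep θ₁| := by linarith
    have honey : (1:ℝ) ≤ |rep θ₂| := by linarith
    have hsinabs : ∀ z : ℝ, |Real.sin z| = |Real.sin (|z|)| := fun z => by
      rcases le_or_gt 0 z with h | h
      · rw [abs_of_nonneg h]
      · rw [abs_of_neg h, Real.sin_neg, abs_neg]
    have hsx : |Real.sin (rep θ₁)| ≤ |θ₁ - θ₂| := by
      rw [hsinabs, ← Real.sin_pi_sub]
      refine (Real.abs_sin_le_abs).trans ?_
      rw [abs_of_nonneg (by linarith : (0:ℝ) ≤ Real.pi - |rep θ₁|)]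
      linarith
    have hsy : |Real.sin (rep θ₂)| ≤ |θ₁ - θ₂| := by
      rw [hsinabs, ← Real.sin_pi_sub]
      refine (Real.abs_sin_le_abs).trans ?_
      rw [abs_of_nonneg (by linarith : (0:ℝ) ≤ Real.pi - |rep θ₂|)]
      linarith
    have hb1 := wrapb α hα0 hα1 (rep θ₁) |θ₁ - θ₂| honex hsx hnear.le
    have hb2 := wrapb α hα0 hα1 (rep θ₂) |θ₁ - θ₂| honey hsy hnear.le
    refine conclude _ ?_
    calc |Real.sin (rep θ₁) / |rep θ₁| ^ (2 * α) - Real.sin (rep θ₂) / |rep θ₂| ^ (2 * α)|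
        ≤ |Real.sin (rep θ₁) / |rep θ₁| ^ (2 * α)| + |Real.sin (rep θ₂) / |rep θ₂| ^ (2 * α)| :=
          abs_sub _ _
      _ ≤ 2 * |θ₁ - θ₂| ^ (1 - 2 * α) := by linarith
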